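/- arXiv:2604.22045 — 3 statements merged into one kernel-verified Lean document; each statement's English description precedes it below -/
import Mathlib

section
/- (Superadditivity, Axiom 4) For all subsets R, T of Fin n with R ∩ T = ∅, the IDG-Vis set attributions satisfy a(R ∪ T) ≥ a(R) + a(T). -/
open scoped RealInnerProductSpace
open MeasureTheory

/-- Direction vector `a_T`: coordinatewise `x_i - x'_i` on `T`, `0` elsewhere. -/
noncomputable def dirVec {n : ℕ} (x x' : EuclideanSpace ℝ (Fin n)) (T : Finset (Fin n)) :
    EuclideanSpace ℝ (Fin n) :=
  WithLp.toLp 2 (fun i => if i ∈ T then x i - x' i else 0)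

/-- Unit direction `â_T = a_T / ‖a_T‖` if `a_T ≠ 0`, else `0`. -/
noncomputable def unitDir {n : ℕ} (x x' : EuclideanSpace ℝ (Fin n)) (T : Finset (Fin n)) :
    EuclideanSpace ℝ (Fin n) :=
  letI := Classical.dec (dirVec x x' T = 0)
  if dirVec x x' T = 0 then 0 else ‖dirVec x x' T‖⁻¹ • dirVec x x' T

/-- Directional gradient `∇_T f(y) = |⟪∇f(y), â_T⟫|`. -/
noncomputable def dirGrad {n : ℕ} (f : EuclideanSpace ℝ (Fin n) → ℝ)
    (x x' : EuclideanSpace ℝ (Fin n)) (T : Finset (Fin n))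
    (y : EuclideanSpace ℝ (Fin n)) : ℝ :=
  |⟪gradient f y, unitDir x x' T⟫|

/-- IDG-Vis score: `∫₀¹ ∇_T f(x' + α (x - x')) dα`. -/
noncomputable def IDGVis {n : ℕ} (f : EuclideanSpace ℝ (Fin n) → ℝ)
    (x x' : EuclideanSpace ℝ (Fin n)) (T : Finset (Fin n)) : ℝ :=
  ∫ α in (0:ℝ)..1, dirGrad f x x' T (x' + α • (x - x'))

/-- Set attribution `a(I) = Σ_{T ⊆ I} IDGVis(T)`. -/
noncomputable def setAttr {n : ℕ} (f : EuclideanSpace ℝ (Fin n) → ℝ)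
    (x x' : EuclideanSpace ℝ (Fin n)) (I : Finset (Fin n)) : ℝ :=
  ∑ T ∈ I.powerset, IDGVis f x x' T

lemma IDGVis_nonneg {n : ℕ} (f : EuclideanSpace ℝ (Fin n) → ℝ)
    (x x' : EuclideanSpace ℝ (Fin n)) (S : Finset (Fin n)) : 0 ≤ IDGVis f x x' S := by
  apply intervalIntegral.integral_nonneg (by norm_num)
  intro α _
  exact abs_nonneg _

lemma IDGVis_empty {n : ℕ} (f : EuclideanSpace ℝ (Fin n) → ℝ)
    (x x' : EuclideanSpace ℝ (Fin n)) : IDGVis f x x' (∅ : Finset (Fin n)) = 0 := by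
  have hd : dirVec x x' (∅ : Finset (Fin n)) = 0 := by
    ext i; simp [dirVec]
  have hu : unitDir x x' (∅ : Finset (Fin n)) = 0 := by
    simp [unitDir, hd]
  simp [IDGVis, dirGrad, hu]

/-- **Superadditivity (Axiom 4).** If `R ∩ T = ∅` then `a(R ∪ T) ≥ a(R) + a(T)`. -/
theorem idgvis_superadditive {n : ℕ} (hn : 1 ≤ n) (f : EuclideanSpace ℝ (Fin n) → ℝ)
    (hf : ContDiff ℝ 1 f) (x x' : EuclideanSpace ℝ (Fin n))
    (R T : Finset (Fin n)) (hRT : R ∩ T = ∅) :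
    setAttr f x x' R + setAttr f x x' T ≤ setAttr f x x' (R ∪ T) := by
  classical
  have hinter : R.powerset ∩ T.powerset = {∅} := by
    ext S
    simp only [Finset.mem_inter, Finset.mem_powerset, Finset.mem_singleton]
    constructor
    · rintro ⟨h1, h2⟩
      have : S ⊆ R ∩ T := Finset.subset_inter h1 h2
      rw [hRT] at this
      exact Finset.subset_empty.mp this
    · rintro rfl
      exact ⟨Finset.empty_subset _, Finset.empty_subset _⟩
  have hcal :
      setAttr f x x' R + setAttr f x x' T
        = ∑ S ∈ R.powerset ∪ T.powerset, IDGVis f x x' S := by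
    rw [setAttr, setAttr, ← Finset.sum_union_inter, hinter]
    simp [IDGVis_empty]
  rw [hcal, setAttr]
  apply Finset.sum_le_sum_of_subset_of_nonneg
  · intro S hS
    rw [Finset.mem_union, Finset.mem_powerset, Finset.mem_powerset] at hS
    rw [Finset.mem_powerset]
    rcases hS with h | h
    · exact h.trans Finset.subset_union_left
    · exact h.trans Finset.subset_union_right
  · intro S _ _; exact IDGVis_nonneg f x x' S
end

section
/- (Completeness lower bound, Lemma 1) Let I₁, …, I_k ⊆ Fin n be pairwise disjoint subsets whose union contains every coordinate i with x_i ≠ x'_i. Then |f(x) − f(x')| ≤ Σ_{j=1}^{k} ‖a_{I_j}‖ · IDGVis(I_j). -/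
open scoped RealInnerProductSpace
open MeasureTheory

lemma inner_gradient_eq' {n : ℕ} (f : EuclideanSpace ℝ (Fin n) → ℝ)
    (y v : EuclideanSpace ℝ (Fin n)) :
    ⟪gradient f y, v⟫ = fderiv ℝ f y v := by
  rw [gradient, InnerProductSpace.toDual_symm_apply]

lemma continuous_gradient' {n : ℕ} {f : EuclideanSpace ℝ (Fin n) → ℝ}
    (hf : ContDiff ℝ 1 f) : Continuous (fun y => gradient f y) :=
  (InnerProductSpace.toDual ℝ _).symm.continuous.comp (hf.continuous_fderiv one_ne_zero)

lemma inner_dirVec_eq {n : ℕ} (f : EuclideanSpace ℝ (Fin n) → ℝ)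
    (x x' : EuclideanSpace ℝ (Fin n)) (T : Finset (Fin n))
    (y : EuclideanSpace ℝ (Fin n)) :
    ⟪gradient f y, dirVec x x' T⟫ = ‖dirVec x x' T‖ * ⟪gradient f y, unitDir x x' T⟫ := by
  rw [unitDir]
  split
  · rename_i h
    simp [h]
  · rename_i h
    rw [real_inner_smul_right]
    have : ‖dirVec x x' T‖ ≠ 0 := norm_ne_zero_iff.mpr h
    field_simp

/-- **Completeness lower bound (Lemma 1).**
If `I₁, …, I_k` are pairwise disjoint and their union contains every coordinate where
`x` and `x'` differ, then `|f(x) - f(x')| ≤ Σ_j ‖a_{I_j}‖ · IDGVis(I_j)`. -/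
theorem idgvis_completeness_bound {n : ℕ} (hn : 1 ≤ n)
    (f : EuclideanSpace ℝ (Fin n) → ℝ) (hf : ContDiff ℝ 1 f)
    (x x' : EuclideanSpace ℝ (Fin n))
    (k : ℕ) (I : Fin k → Finset (Fin n))
    (hdisj : ∀ j j' : Fin k, j ≠ j' → Disjoint (I j) (I j'))
    (hcover : ∀ i : Fin n, x i ≠ x' i → ∃ j : Fin k, i ∈ I j) :
    |f x - f x'| ≤ ∑ j : Fin k, ‖dirVec x x' (I j)‖ * IDGVis f x x' (I j) := by
  classical
  set γ : ℝ → EuclideanSpace ℝ (Fin n) := fun α => x' + α • (x - x') with hγ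
  have hγcont : Continuous γ := by fun_prop
  have hderivγ : ∀ α : ℝ, HasDerivAt γ (x - x') α := fun α => by
    have h := ((hasDerivAt_id α).smul_const (x - x')).const_add x'; rw [one_smul] at h; exact h
  have hD := hf.differentiable one_ne_zero
  have hkey : ∀ α : ℝ, HasDerivAt (fun t => f (γ t)) (⟪gradient f (γ α), x - x'⟫) α := by
    intro α
    rw [inner_gradient_eq']
    exact (hD (γ α)).hasFDerivAt.comp_hasDerivAt α (hderivγ α)
  have hgc := continuous_gradient' hf
  have hcont : Continuous fun α => ⟪gradient f (γ α), x - x'⟫ :=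
    (hgc.comp hγcont).inner continuous_const
  -- FTC
  have hFTC : f x - f x' = ∫ α in (0:ℝ)..1, ⟪gradient f (γ α), x - x'⟫ := by
    have h := intervalIntegral.integral_eq_sub_of_hasDerivAt
      (fun α _ => hkey α) (hcont.intervalIntegrable 0 1)
    rw [h]
    simp [hγ]
  -- decomposition of x - x'
  have hdecomp : x - x' = ∑ j : Fin k, dirVec x x' (I j) := by
    ext i
    have hs : (∑ j : Fin k, dirVec x x' (I j)) i = ∑ j : Fin k, dirVec x x' (I j) i := by
      rw [WithLp.ofLp_sum]; exact Finset.sum_apply i _ _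
    rw [hs]
    show x i - x' i = _
    by_cases h : ∃ j, i ∈ I j
    · obtain ⟨j, hj⟩ := h
      rw [Finset.sum_eq_single_of_mem j (Finset.mem_univ j)]
      · simp [dirVec, hj]
      · intro j' _ hne
        have : i ∉ I j' := fun hmem =>
          by simpa using (hdisj j' j hne).le_bot (Finset.mem_inter.mpr ⟨hmem, hj⟩)
        simp [dirVec, this]
    · push_neg at h
      have hx : x i = x' i := by
        by_contra hne
        exact absurd (hcover i hne) (by push_neg; exact h)
      simp [dirVec, h, hx]
  -- integrands
  have hcontj : ∀ j : Fin k, Continuous fun α =>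
      ‖dirVec x x' (I j)‖ * ⟪gradient f (γ α), unitDir x x' (I j)⟫ := by
    intro j
    exact continuous_const.mul ((hgc.comp hγcont).inner continuous_const)
  have hsplit : ∀ α : ℝ, ⟪gradient f (γ α), x - x'⟫ =
      ∑ j : Fin k, ‖dirVec x x' (I j)‖ * ⟪gradient f (γ α), unitDir x x' (I j)⟫ := by
    intro α
    rw [hdecomp, inner_sum]
    exact Finset.sum_congr rfl fun j _ => inner_dirVec_eq f x x' (I j) (γ α)
  calc |f x - f x'|
      = |∫ α in (0:ℝ)..1, ∑ j : Fin k,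
          ‖dirVec x x' (I j)‖ * ⟪gradient f (γ α), unitDir x x' (I j)⟫| := by
        rw [hFTC]
        congr 1
        exact intervalIntegral.integral_congr fun α _ => hsplit α
    _ = |∑ j : Fin k, ∫ α in (0:ℝ)..1,
          ‖dirVec x x' (I j)‖ * ⟪gradient f (γ α), unitDir x x' (I j)⟫| := by
        rw [intervalIntegral.integral_finset_sum]
        exact fun j _ => (hcontj j).intervalIntegrable 0 1
    _ ≤ ∑ j : Fin k, |∫ α in (0:ℝ)..1,
          ‖dirVec x x' (I j)‖ * ⟪gradient f (γ α), unitDir x x' (I j)⟫| :=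
        Finset.abs_sum_le_sum_abs _ _
    _ ≤ ∑ j : Fin k, ‖dirVec x x' (I j)‖ * IDGVis f x x' (I j) := by
        apply Finset.sum_le_sum
        intro j _
        calc |∫ α in (0:ℝ)..1, ‖dirVec x x' (I j)‖ * ⟪gradient f (γ α), unitDir x x' (I j)⟫|
            ≤ ∫ α in (0:ℝ)..1,
                |‖dirVec x x' (I j)‖ * ⟪gradient f (γ α), unitDir x x' (I j)⟫| :=
              intervalIntegral.abs_integral_le_integral_abs zero_le_one
          _ = ∫ α in (0:ℝ)..1, ‖dirVec x x' (I j)‖ * dirGrad f x x' (I j) (γ α) := by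
              apply intervalIntegral.integral_congr
              intro α _
              simp only []
              rw [abs_mul, abs_norm, dirGrad]
          _ = ‖dirVec x x' (I j)‖ * IDGVis f x x' (I j) := by
              rw [IDGVis, ← intervalIntegral.integral_const_mul]
end

section
/- (Sensitivity, Lemma 2) Suppose the input x and the baseline x' agree on every coordinate outside a subset I ⊆ Fin n (i.e., x_i = x'_i for all i ∉ I) and f(x) ≠ f(x'). Then the IDG-Vis set attribution satisfies a(I) > 0; in particular a(I) ≠ 0. -/
open scoped RealInnerProductSpace
open MeasureTheory

/-- **Sensitivity (Lemma 2).** If `x` and `x'` agree outside `I` and `f(x) ≠ f(x')`,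
then `a(I) > 0`; in particular `a(I) ≠ 0`. -/
theorem idgvis_sensitivity {n : ℕ} (hn : 1 ≤ n)
    (f : EuclideanSpace ℝ (Fin n) → ℝ) (hf : ContDiff ℝ 1 f)
    (x x' : EuclideanSpace ℝ (Fin n)) (I : Finset (Fin n))
    (hagree : ∀ i : Fin n, i ∉ I → x i = x' i)
    (hne : f x ≠ f x') :
    0 < setAttr f x x' I ∧ setAttr f x x' I ≠ 0 := by
  have hxx : x ≠ x' := fun h => hne (by rw [h])
  have hv0 : x - x' ≠ 0 := sub_ne_zero.mpr hxx
  have hdir : dirVec x x' I = x - x' := by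
    ext i
    by_cases hi : i ∈ I
    · simp [dirVec, hi]
    · simp [dirVec, hi, hagree i hi]
  set v : EuclideanSpace ℝ (Fin n) := x - x' with hv
  set γ : ℝ → EuclideanSpace ℝ (Fin n) := fun α => x' + α • v with hγ
  have hγderiv : ∀ α : ℝ, HasDerivAt (fun t => f (γ t)) (fderiv ℝ f (γ α) v) α := by
    intro α
    have h1 : HasDerivAt γ v α := by
      have h2 : HasDerivAt (fun t : ℝ => t • v) ((1:ℝ) • v) α :=
        (hasDerivAt_id α).smul_const v
      rw [one_smul] at h2
      exact h2.const_add x'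
    exact ((hf.differentiable one_ne_zero (γ α)).hasFDerivAt).comp_hasDerivAt α h1
  have hcont : Continuous fun α : ℝ => (fderiv ℝ f (γ α)) v := by
    have h1 : Continuous fun y => fderiv ℝ f y := hf.continuous_fderiv one_ne_zero
    have h2 : Continuous γ := by fun_prop
    exact (ContinuousLinearMap.apply ℝ ℝ v).continuous.comp (h1.comp h2)
  have hftc : ∫ α in (0:ℝ)..1, (fderiv ℝ f (γ α)) v = f x - f x' := by
    have := intervalIntegral.integral_eq_sub_of_hasDerivAt
      (f := fun t => f (γ t)) (f' := fun α => (fderiv ℝ f (γ α)) v)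
      (a := (0:ℝ)) (b := 1) (fun t _ => hγderiv t)
      (hcont.intervalIntegrable 0 1)
    simpa [hγ, hv] using this
  have hinner : ∀ y, ⟪gradient f y, v⟫ = (fderiv ℝ f y) v := by
    intro y
    rw [gradient]
    exact InnerProductSpace.toDual_symm_apply
  have hunit : unitDir x x' I = ‖v‖⁻¹ • v := by
    rw [unitDir]
    simp [hdir, hv0]
  have hdg : ∀ y, dirGrad f x x' I y = ‖v‖⁻¹ * |(fderiv ℝ f y) v| := by
    intro y
    rw [dirGrad, hunit, real_inner_smul_right, hinner, abs_mul,
      abs_of_nonneg (inv_nonneg.mpr (norm_nonneg v))]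
  have hIpos : 0 < IDGVis f x x' I := by
    have habs : |f x - f x'| ≤ ∫ α in (0:ℝ)..1, |(fderiv ℝ f (γ α)) v| := by
      rw [← hftc]
      exact intervalIntegral.abs_integral_le_integral_abs zero_le_one
    have hpos : 0 < ∫ α in (0:ℝ)..1, |(fderiv ℝ f (γ α)) v| :=
      lt_of_lt_of_le (abs_pos.mpr (sub_ne_zero.mpr hne)) habs
    have : IDGVis f x x' I = ‖v‖⁻¹ * ∫ α in (0:ℝ)..1, |(fderiv ℝ f (γ α)) v| := by
      rw [IDGVis]
      simp_rw [hdg]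
      rw [intervalIntegral.integral_const_mul]
    rw [this]
    exact mul_pos (inv_pos.mpr (norm_pos_iff.mpr hv0)) hpos
  have hnn : ∀ T ∈ I.powerset, 0 ≤ IDGVis f x x' T := fun T _ =>
    intervalIntegral.integral_nonneg zero_le_one (fun u _ => abs_nonneg _)
  have hpos : 0 < setAttr f x x' I :=
    Finset.sum_pos' hnn ⟨I, Finset.mem_powerset_self I, hIpos⟩
  exact ⟨hpos, ne_of_gt hpos⟩
end
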